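/- Let S be a gcd-closed set of n distinct positive integers with max_{x∈S} |G_S(x)| = 2, and let a ≥ 1. Then β_{a,k} ≠ 0 for every k with 1 ≤ k ≤ n; consequently the a-th power LCM matrix [S^a] (with entries lcm(x_i,x_j)^a) is nonsingular. -/

import Mathlib

open ArithmeticFunction Finset Matrix
open scoped ArithmeticFunction.Moebius

/-- The set of greatest-type divisors of `x` in `S`. -/
def GTD (S : Finset ℕ) (x : ℕ) : Finset ℕ :=
  S.filter (fun d => d < x ∧ d ∣ x ∧ ∀ y ∈ S, d ∣ y → y ∣ x → y = d ∨ y = x)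


noncomputable def cfun (a d : ℕ) : ℚ := ∑ e ∈ d.divisors, ((e : ℚ) ^ a)⁻¹ * (μ (d / e))

lemma moebius_sum (a : ℕ) : ∀ (m : ℕ), m > 0 → ∑ d ∈ m.divisors, cfun a d = ((m : ℚ) ^ a)⁻¹ := by
  refine (sum_eq_iff_sum_smul_moebius_eq (f := cfun a)
    (g := fun m => ((m : ℚ) ^ a)⁻¹)).mpr ?_
  intro n hn
  rw [Nat.sum_divisorsAntidiagonal' (f := fun i j => (μ i : ℤ) • ((j : ℚ)^a)⁻¹)]
  unfold cfun
  refine Finset.sum_congr rfl fun d hd => ?_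
  rw [zsmul_eq_mul, mul_comm]



lemma exists_gtd (S : Finset ℕ) (hpos : ∀ s ∈ S, 0 < s) (x m : ℕ)
    (hx : x ∈ S) (hm : m ∈ S) (hdvd : m ∣ x) (hlt : m < x) :
    ∃ y ∈ GTD S x, m ∣ y := by
  have hx0 : 0 < x := hpos x hx
  set T := S.filter (fun y => m ∣ y ∧ y ∣ x ∧ y < x) with hT
  have hmT : m ∈ T := by simp [hT, hm, hdvd, hlt]
  have hne : T.Nonempty := ⟨m, hmT⟩
  obtain ⟨hyS, hym, hyx, hylt⟩ : T.max' hne ∈ S ∧ m ∣ T.max' hne ∧ T.max' hne ∣ x ∧ T.max' hne < x := by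
    have := T.max'_mem hne
    simp only [hT, mem_filter] at this
    tauto
  refine ⟨T.max' hne, ?_, hym⟩
  simp only [GTD, mem_filter]
  refine ⟨hyS, hylt, hyx, fun y hy hdy hyx' => ?_⟩
  by_cases hyeq : y = x
  · right; exact hyeq
  · left
    have hy0 : 0 < y := hpos y hy
    have hylt' : y < x := lt_of_le_of_ne (Nat.le_of_dvd hx0 hyx') hyeq
    have hyT : y ∈ T := by
      simp only [hT, mem_filter]
      exact ⟨hy, hym.trans hdy, hyx', hylt'⟩
    have h1 : y ≤ T.max' hne := T.le_max' y hyT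
    have h2 : T.max' hne ≤ y := Nat.le_of_dvd hy0 hdy
    omega

lemma filter_eq_gtd_filter (S : Finset ℕ) (hpos : ∀ s ∈ S, 0 < s)
    (hgcd : ∀ s ∈ S, ∀ t ∈ S, Nat.gcd s t ∈ S) (xk : ℕ) (hxk : xk ∈ S) (d : ℕ) (hd : d ∣ xk) :
    (∀ s ∈ S, s < xk → ¬ d ∣ s) ↔ (∀ y ∈ GTD S xk, ¬ d ∣ y) := by
  constructor
  · intro h y hy
    simp only [GTD, mem_filter] at hy
    exact h y hy.1 hy.2.1
  · intro h s hs hslt hds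
    have hm : Nat.gcd s xk ∈ S := hgcd s hs xk hxk
    have hmx : Nat.gcd s xk ∣ xk := Nat.gcd_dvd_right s xk
    have hs0 : 0 < s := hpos s hs
    have hmlt : Nat.gcd s xk < xk := lt_of_le_of_lt (Nat.le_of_dvd hs0 (Nat.gcd_dvd_left s xk)) hslt
    obtain ⟨y, hyG, hmy⟩ := exists_gtd S hpos xk (Nat.gcd s xk) hxk hm hmx hmlt
    exact h y hyG ((Nat.dvd_gcd hds hd).trans hmy)




lemma sum_filter_dvd (a : ℕ) (xk y : ℕ) (hxk0 : xk ≠ 0) (hy : 0 < y) (hyx : y ∣ xk) :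
    ∑ d ∈ xk.divisors.filter (· ∣ y), cfun a d = ((y : ℚ) ^ a)⁻¹ := by
  rw [show xk.divisors.filter (· ∣ y) = y.divisors by
    ext d
    simp only [mem_filter, Nat.mem_divisors]
    constructor
    · rintro ⟨⟨_, _⟩, hdy⟩; exact ⟨hdy, hy.ne'⟩
    · rintro ⟨hdy, _⟩; exact ⟨⟨hdy.trans hyx, hxk0⟩, hdy⟩]
  exact moebius_sum a y hy

lemma inv_pow_le_of_le (a : ℕ) {y z : ℕ} (hy : 0 < y) (hxy : y ≤ z) :
    ((z : ℚ) ^ a)⁻¹ ≤ ((y : ℚ) ^ a)⁻¹ := by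
  have h1 : (0:ℚ) < (y:ℚ)^a := by positivity
  apply inv_anti₀ h1
  exact pow_le_pow_left₀ (by positivity) (by exact_mod_cast hxy) a

lemma inv_pow_lt_of_lt (a : ℕ) (ha : 0 < a) {y z : ℕ} (hy : 0 < y) (hxy : y < z) :
    ((z : ℚ) ^ a)⁻¹ < ((y : ℚ) ^ a)⁻¹ := by
  have h1 : (0:ℚ) < (y:ℚ)^a := by positivity
  apply inv_strictAnti₀ h1
  exact pow_lt_pow_left₀ (by exact_mod_cast hxy) (by positivity) (by omega)

lemma key_ineq (a : ℕ) (ha : 0 < a) {g y1 y2 : ℕ} (hg : 0 < g)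
    (h1 : g ∣ y1) (h2 : g ∣ y2) (hgy1 : g < y1) (hgy2 : g < y2) (hne : y1 ≠ y2) :
    ((y1 : ℚ) ^ a)⁻¹ + ((y2 : ℚ) ^ a)⁻¹ < ((g : ℚ) ^ a)⁻¹ := by
  wlog hlt : y1 < y2 generalizing y1 y2
  · have := this h2 h1 hgy2 hgy1 (Ne.symm hne) (by omega)
    linarith
  have hy1 : 2 * g ≤ y1 := by
    obtain ⟨u, hu⟩ := h1
    have : 2 ≤ u := by nlinarith
    nlinarith
  have hy2 : 3 * g ≤ y2 := by
    obtain ⟨v, hv⟩ := h2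
    have : 3 ≤ v := by nlinarith
    nlinarith
  have hG : (0:ℚ) < ((g:ℚ)^a)⁻¹ := by positivity
  have e2 : (((2 * g : ℕ) : ℚ) ^ a)⁻¹ ≤ (1/2) * ((g:ℚ)^a)⁻¹ := by
    push_cast
    rw [mul_pow, mul_inv]
    have h2a : (2:ℚ) ≤ (2:ℚ)^a := by
      calc (2:ℚ) = 2^1 := (pow_one 2).symm
      _ ≤ 2^a := pow_le_pow_right₀ (by norm_num) (by omega)
    have : ((2:ℚ)^a)⁻¹ ≤ 1/2 := by
      rw [one_div]
      exact inv_anti₀ (by norm_num) h2a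
    have hginv : (0:ℚ) ≤ ((g:ℚ)^a)⁻¹ := le_of_lt hG
    exact mul_le_mul_of_nonneg_right this hginv
  have e3 : (((3 * g : ℕ) : ℚ) ^ a)⁻¹ ≤ (1/3) * ((g:ℚ)^a)⁻¹ := by
    push_cast
    rw [mul_pow, mul_inv]
    have h3a : (3:ℚ) ≤ (3:ℚ)^a := by
      calc (3:ℚ) = 3^1 := (pow_one 3).symm
      _ ≤ 3^a := pow_le_pow_right₀ (by norm_num) (by omega)
    have : ((3:ℚ)^a)⁻¹ ≤ 1/3 := by
      rw [one_div]
      exact inv_anti₀ (by norm_num) h3a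
    exact mul_le_mul_of_nonneg_right this (le_of_lt hG)
  have b1 : ((y1 : ℚ) ^ a)⁻¹ ≤ (((2 * g : ℕ) : ℚ) ^ a)⁻¹ :=
    inv_pow_le_of_le a (by omega) hy1
  have b2 : ((y2 : ℚ) ^ a)⁻¹ ≤ (((3 * g : ℕ) : ℚ) ^ a)⁻¹ :=
    inv_pow_le_of_le a (by omega) hy2
  linarith






lemma mem_gtd_elim {S : Finset ℕ} {x y : ℕ} (h : y ∈ GTD S x) :
    y ∈ S ∧ y < x ∧ y ∣ x ∧ ∀ z ∈ S, y ∣ z → z ∣ x → z = y ∨ z = x := by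
  simpa [GTD] using h

lemma beta_ne (a : ℕ) (ha : 0 < a) (S : Finset ℕ) (hpos : ∀ s ∈ S, 0 < s)
    (hgcd : ∀ s ∈ S, ∀ t ∈ S, Nat.gcd s t ∈ S) (xk : ℕ) (hxk : xk ∈ S)
    (hcard : (GTD S xk).card ≤ 2) :
    ∑ d ∈ xk.divisors.filter (fun d => ∀ s ∈ S, s < xk → ¬ d ∣ s), cfun a d ≠ 0 := by
  have hxk0 : 0 < xk := hpos xk hxk
  have hfe : xk.divisors.filter (fun d => ∀ s ∈ S, s < xk → ¬ d ∣ s)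
      = xk.divisors.filter (fun d => ∀ y ∈ GTD S xk, ¬ d ∣ y) := by
    apply filter_congr
    intro d hd
    have hdvd : d ∣ xk := (Nat.mem_divisors.mp hd).1
    exact filter_eq_gtd_filter S hpos hgcd xk hxk d hdvd
  rw [hfe]
  interval_cases h : (GTD S xk).card
  · -- card = 0
    rw [Finset.card_eq_zero] at h
    have : xk.divisors.filter (fun d => ∀ y ∈ GTD S xk, ¬ d ∣ y) = xk.divisors := by
      apply filter_true_of_mem
      intro d _ y hy
      simp [h] at hy
    rw [this, moebius_sum a xk hxk0]
    positivity
  · -- card = 1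
    obtain ⟨y, hy⟩ := Finset.card_eq_one.mp h
    have hyG : y ∈ GTD S xk := by rw [hy]; exact mem_singleton_self y
    obtain ⟨hyS, hylt, hydvd, _⟩ := mem_gtd_elim hyG
    have hy0 : 0 < y := hpos y hyS
    have : xk.divisors.filter (fun d => ∀ y ∈ GTD S xk, ¬ d ∣ y)
        = xk.divisors.filter (fun d => ¬ d ∣ y) := by
      apply filter_congr; intro d _; simp [hy]
    rw [this]
    have hsplit := Finset.sum_filter_add_sum_filter_not xk.divisors (fun d => d ∣ y) (cfun a)
    have h1 : ∑ d ∈ xk.divisors.filter (fun d => d ∣ y), cfun a d = ((y:ℚ)^a)⁻¹ :=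
      sum_filter_dvd a xk y hxk0.ne' hy0 hydvd
    have h2 : ∑ d ∈ xk.divisors, cfun a d = ((xk:ℚ)^a)⁻¹ := moebius_sum a xk hxk0
    have hlt := inv_pow_lt_of_lt a ha hy0 hylt
    intro hc
    rw [hc] at hsplit
    rw [h1] at hsplit
    rw [h2] at hsplit
    linarith
  · -- card = 2
    obtain ⟨y1, y2, hne, hy⟩ := Finset.card_eq_two.mp h
    have hy1G : y1 ∈ GTD S xk := by rw [hy]; simp
    have hy2G : y2 ∈ GTD S xk := by rw [hy]; simp
    obtain ⟨h1S, h1lt, h1dvd, h1max⟩ := mem_gtd_elim hy1G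
    obtain ⟨h2S, h2lt, h2dvd, h2max⟩ := mem_gtd_elim hy2G
    have h10 : 0 < y1 := hpos y1 h1S
    have h20 : 0 < y2 := hpos y2 h2S
    set g := Nat.gcd y1 y2 with hgdef
    have hgS : g ∈ S := hgcd y1 h1S y2 h2S
    have hg1 : g ∣ y1 := Nat.gcd_dvd_left y1 y2
    have hg2 : g ∣ y2 := Nat.gcd_dvd_right y1 y2
    have hg0 : 0 < g := Nat.gcd_pos_of_pos_left _ h10
    have hgne1 : g ≠ y1 := by
      intro hq
      have h12 : y1 ∣ y2 := hq ▸ hg2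
      rcases h1max y2 h2S h12 h2dvd with h | h
      · exact hne h.symm
      · omega
    have hgne2 : g ≠ y2 := by
      intro hq
      have h21 : y2 ∣ y1 := hq ▸ hg1
      rcases h2max y1 h1S h21 h1dvd with h | h
      · exact hne h
      · omega
    have hglt1 : g < y1 := lt_of_le_of_ne (Nat.le_of_dvd h10 hg1) hgne1
    have hglt2 : g < y2 := lt_of_le_of_ne (Nat.le_of_dvd h20 hg2) hgne2
    have hpred : xk.divisors.filter (fun d => ∀ y ∈ GTD S xk, ¬ d ∣ y)
        = xk.divisors.filter (fun d => ¬ (d ∣ y1 ∨ d ∣ y2)) := by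
      apply filter_congr; intro d _
      simp only [hy, mem_insert, mem_singleton, eq_iff_iff]
      constructor
      · rintro hA (h | h)
        · exact hA y1 (Or.inl rfl) h
        · exact hA y2 (Or.inr rfl) h
      · rintro hA z (rfl | rfl) hz
        · exact hA (Or.inl hz)
        · exact hA (Or.inr hz)
    rw [hpred]
    have hsplit := Finset.sum_filter_add_sum_filter_not xk.divisors (fun d => d ∣ y1 ∨ d ∣ y2) (cfun a)
    have hunion : xk.divisors.filter (fun d => d ∣ y1 ∨ d ∣ y2)
        = xk.divisors.filter (fun d => d ∣ y1) ∪ xk.divisors.filter (fun d => d ∣ y2) :=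
      (Finset.filter_or _ _ _)
    have hinter : xk.divisors.filter (fun d => d ∣ y1) ∩ xk.divisors.filter (fun d => d ∣ y2)
        = xk.divisors.filter (fun d => d ∣ g) := by
      rw [← Finset.filter_and]
      apply filter_congr; intro d _
      exact ⟨fun ⟨u, v⟩ => Nat.dvd_gcd u v, fun hd => ⟨hd.trans hg1, hd.trans hg2⟩⟩
    have hsum_union : ∑ d ∈ xk.divisors.filter (fun d => d ∣ y1 ∨ d ∣ y2), cfun a d
        = ((y1:ℚ)^a)⁻¹ + ((y2:ℚ)^a)⁻¹ - ((g:ℚ)^a)⁻¹ := by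
      have hui := Finset.sum_union_inter (s₁ := xk.divisors.filter (fun d => d ∣ y1))
        (s₂ := xk.divisors.filter (fun d => d ∣ y2)) (f := cfun a)
      rw [hinter, ← hunion] at hui
      rw [sum_filter_dvd a xk y1 hxk0.ne' h10 h1dvd] at hui
      rw [sum_filter_dvd a xk y2 hxk0.ne' h20 h2dvd] at hui
      rw [sum_filter_dvd a xk g hxk0.ne' hg0 (hg1.trans h1dvd)] at hui
      linarith
    have h2 : ∑ d ∈ xk.divisors, cfun a d = ((xk:ℚ)^a)⁻¹ := moebius_sum a xk hxk0
    have hki := key_ineq a ha hg0 hg1 hg2 hglt1 hglt2 hne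
    have hxpos : (0:ℚ) < ((xk:ℚ)^a)⁻¹ := by positivity
    intro hc
    rw [hc, hsum_union, h2] at hsplit
    linarith




lemma bucket_partition (a n : ℕ) (x : Fin n → ℕ) (hinj : Function.Injective x)
    (hpos : ∀ i, 0 < x i)
    (S : Finset ℕ) (hS : S = Finset.image x Finset.univ)
    (hgcd : ∀ s ∈ S, ∀ t ∈ S, Nat.gcd s t ∈ S) (g : ℕ) (hg : g ∈ S) :
    ∑ k ∈ Finset.univ.filter (fun k => x k ∣ g),
      (∑ d ∈ (x k).divisors.filter (fun d => ∀ t, x t < x k → ¬ d ∣ x t), cfun a d)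
      = ((g : ℚ) ^ a)⁻¹ := by
  have hg0 : 0 < g := by
    rw [hS] at hg
    obtain ⟨i, _, rfl⟩ := Finset.mem_image.mp hg
    exact hpos i
  set bucket : Fin n → Finset ℕ :=
    fun k => (x k).divisors.filter (fun d => ∀ t, x t < x k → ¬ d ∣ x t) with hbucket
  have hdisj : (↑(Finset.univ.filter (fun k => x k ∣ g)) : Set (Fin n)).PairwiseDisjoint bucket := by
    intro k _ k' _ hne
    simp only [Function.onFun, Finset.disjoint_left]
    intro d hd hd'
    simp only [hbucket, mem_filter, Nat.mem_divisors] at hd hd'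
    rcases lt_trichotomy (x k) (x k') with h | h | h
    · exact hd'.2 k h hd.1.1
    · exact hne (hinj h)
    · exact hd.2 k' h hd'.1.1
  have hcover : (Finset.univ.filter (fun k => x k ∣ g)).biUnion bucket = g.divisors := by
    ext d
    simp only [Finset.mem_biUnion, mem_filter, Finset.mem_univ, true_and, Nat.mem_divisors,
      hbucket]
    constructor
    · rintro ⟨k, hkg, ⟨hdk, _⟩, _⟩
      exact ⟨hdk.trans hkg, hg0.ne'⟩
    · rintro ⟨hdg, -⟩
      set M := S.filter (d ∣ ·) with hM
      have hgM : g ∈ M := by simp [hM, hg, hdg]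
      have hMne : M.Nonempty := ⟨g, hgM⟩
      have hsmem : M.min' hMne ∈ M := M.min'_mem hMne
      simp only [hM, mem_filter] at hsmem
      obtain ⟨hsS, hds⟩ := hsmem
      have hsS' : M.min' hMne ∈ Finset.image x Finset.univ := by
        rw [← hS]; exact hsS
      obtain ⟨k, -, hk⟩ := Finset.mem_image.mp hsS'
      have hdxk : d ∣ x k := hk ▸ hds
      have hxkg : x k ∣ g := by
        have hmS : Nat.gcd (x k) g ∈ S := by
          apply hgcd
          · rw [hS]; exact Finset.mem_image.mpr ⟨k, Finset.mem_univ k, rfl⟩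
          · exact hg
        have hdm : d ∣ Nat.gcd (x k) g := Nat.dvd_gcd hdxk hdg
        have hmM : Nat.gcd (x k) g ∈ M := by simp [hM, hmS, hdm]
        have h1 : M.min' hMne ≤ Nat.gcd (x k) g := M.min'_le _ hmM
        have h2 : Nat.gcd (x k) g ≤ x k := Nat.le_of_dvd (hpos k) (Nat.gcd_dvd_left _ _)
        have h3 : Nat.gcd (x k) g = x k := by omega
        exact h3 ▸ Nat.gcd_dvd_right (x k) g
      refine ⟨k, hxkg, ⟨hdxk, (hpos k).ne'⟩, ?_⟩
      intro t hlt hdt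
      have htM : x t ∈ M := by
        simp only [hM, mem_filter]
        exact ⟨by rw [hS]; exact Finset.mem_image.mpr ⟨t, Finset.mem_univ t, rfl⟩, hdt⟩
      have := M.min'_le _ htM
      omega
  calc ∑ k ∈ Finset.univ.filter (fun k => x k ∣ g), ∑ d ∈ bucket k, cfun a d
      = ∑ d ∈ (Finset.univ.filter (fun k => x k ∣ g)).biUnion bucket, cfun a d :=
        (Finset.sum_biUnion hdisj).symm
    _ = ∑ d ∈ g.divisors, cfun a d := by rw [hcover]
    _ = ((g : ℚ) ^ a)⁻¹ := moebius_sum a g hg0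

lemma matrix_det_ne (n a : ℕ) (x : Fin n → ℕ) (hinj : Function.Injective x)
    (hpos : ∀ i, 0 < x i) (β : Fin n → ℚ) (hβne : ∀ k, β k ≠ 0)
    (hsum : ∀ i j : Fin n, ∑ k ∈ Finset.univ.filter (fun k => x k ∣ Nat.gcd (x i) (x j)), β k
      = ((Nat.gcd (x i) (x j) : ℚ) ^ a)⁻¹) :
    (Matrix.of fun i j : Fin n => ((Nat.lcm (x i) (x j) : ℚ)) ^ a).det ≠ 0 := by
  classical
  set A : Matrix (Fin n) (Fin n) ℚ :=
    Matrix.of (fun i j => ((Nat.gcd (x i) (x j) : ℚ) ^ a)⁻¹) with hA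
  set B : Matrix (Fin n) (Fin n) ℚ :=
    Matrix.of (fun i k => if x k ∣ x i then (1:ℚ) else 0) with hB
  have hAfact : A = B * Matrix.diagonal β * Bᵀ := by
    ext i j
    rw [Matrix.mul_apply]
    have key : ∀ k, (B * Matrix.diagonal β) i k * Bᵀ k j
        = if x k ∣ Nat.gcd (x i) (x j) then β k else 0 := by
      intro k
      rw [Matrix.mul_diagonal]
      simp only [hB, Matrix.transpose_apply, Matrix.of_apply]
      by_cases h1 : x k ∣ x i <;> by_cases h2 : x k ∣ x j <;>
        simp [h1, h2, Nat.dvd_gcd_iff]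
    simp only [key]
    rw [← Finset.sum_filter]
    exact (hsum i j).symm
  have hgcd0 : ∀ i j : Fin n, ((Nat.gcd (x i) (x j) : ℚ)) ≠ 0 := by
    intro i j
    have := Nat.gcd_pos_of_pos_left (x j) (hpos i)
    positivity
  have hLfact : (Matrix.of fun i j : Fin n => ((Nat.lcm (x i) (x j) : ℚ)) ^ a)
      = Matrix.diagonal (fun i => ((x i : ℚ)) ^ a) * A
        * Matrix.diagonal (fun i => ((x i : ℚ)) ^ a) := by
    ext i j
    rw [Matrix.mul_diagonal, Matrix.diagonal_mul]
    simp only [hA, Matrix.of_apply]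
    have hlg : ((Nat.gcd (x i) (x j) : ℚ)) * ((Nat.lcm (x i) (x j) : ℚ))
        = (x i : ℚ) * (x j : ℚ) := by
      exact_mod_cast Nat.gcd_mul_lcm (x i) (x j)
    have hkey : ((Nat.lcm (x i) (x j) : ℚ)) ^ a * ((Nat.gcd (x i) (x j) : ℚ)) ^ a
        = (x i : ℚ) ^ a * (x j : ℚ) ^ a := by
      rw [← mul_pow, ← mul_pow, mul_comm ((Nat.lcm (x i) (x j) : ℚ)) _, hlg]
    have hg := hgcd0 i j
    field_simp
    linarith [hkey]
  -- determinant of B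
  have hdetB : B.det = 1 := by
    set sp : Equiv.Perm (Fin n) := Tuple.sort x with hsp
    have hmono : StrictMono (x ∘ sp) :=
      (Tuple.monotone_sort x).strictMono_of_injective (hinj.comp sp.injective)
    have htri : (B.submatrix sp sp).BlockTriangular OrderDual.toDual := by
      intro i j hij
      have hij' : i < j := hij
      have hlt : x (sp i) < x (sp j) := hmono hij'
      have hndvd : ¬ x (sp j) ∣ x (sp i) := fun h => by
        have := Nat.le_of_dvd (hpos (sp i)) h
        omega
      simp [hB, Matrix.submatrix_apply, hndvd]
    have := Matrix.det_of_lowerTriangular (B.submatrix sp sp) htri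
    rw [Matrix.det_submatrix_equiv_self] at this
    rw [this]
    apply Finset.prod_eq_one
    intro i _
    simp [hB, Matrix.submatrix_apply]
  rw [hLfact, hAfact]
  rw [Matrix.det_mul, Matrix.det_mul, Matrix.det_mul, Matrix.det_mul, hdetB,
    Matrix.det_transpose, hdetB, Matrix.det_diagonal, Matrix.det_diagonal]
  have h1 : ∏ i : Fin n, ((x i : ℚ)) ^ a ≠ 0 := by
    apply Finset.prod_ne_zero_iff.mpr
    intro i _
    have := hpos i
    positivity
  have h2 : ∏ i : Fin n, β i ≠ 0 := Finset.prod_ne_zero_iff.mpr (fun i _ => hβne i)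
  simp only [one_mul, mul_one]
  exact mul_ne_zero (mul_ne_zero h1 h2) h1


theorem stmt_7 (n : ℕ) (hn : 0 < n) (a : ℕ) (ha : 0 < a)
    (x : Fin n → ℕ) (hinj : Function.Injective x) (hpos : ∀ i, 0 < x i)
    (S : Finset ℕ) (hS : S = Finset.image x Finset.univ)
    (hgcd : ∀ s ∈ S, ∀ t ∈ S, Nat.gcd s t ∈ S)
    (hmax : S.sup (fun s => (GTD S s).card) = 2)
    (β : Fin n → ℚ)
    (hβ : ∀ k, β k =
      ∑ d ∈ (x k).divisors.filter (fun d => ∀ t, x t < x k → ¬ d ∣ x t),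
        ∑ e ∈ d.divisors, ((e : ℚ) ^ a)⁻¹ * (μ (d / e))) :
    (∀ k, β k ≠ 0) ∧
    (Matrix.of fun i j : Fin n => ((Nat.lcm (x i) (x j) : ℚ)) ^ a).det ≠ 0 := by
  have hposS : ∀ s ∈ S, 0 < s := by
    intro s hs
    rw [hS] at hs
    obtain ⟨i, -, rfl⟩ := Finset.mem_image.mp hs
    exact hpos i
  have hxS : ∀ k, x k ∈ S := by
    intro k
    rw [hS]
    exact Finset.mem_image.mpr ⟨k, Finset.mem_univ k, rfl⟩
  have hcard2 : ∀ k, (GTD S (x k)).card ≤ 2 := by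
    intro k
    rw [← hmax]
    exact Finset.le_sup (f := fun s => (GTD S s).card) (hxS k)
  have hβ' : ∀ k, β k =
      ∑ d ∈ (x k).divisors.filter (fun d => ∀ s ∈ S, s < x k → ¬ d ∣ s), cfun a d := by
    intro k
    rw [hβ k]
    apply Finset.sum_congr
    · apply filter_congr
      intro d _
      constructor
      · intro h s hs hlt
        rw [hS] at hs
        obtain ⟨t, -, rfl⟩ := Finset.mem_image.mp hs
        exact h t hlt
      · intro h t hlt
        exact h (x t) (hxS t) hlt
    · intro d _
      rfl
  have part1 : ∀ k, β k ≠ 0 := by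
    intro k
    rw [hβ' k]
    exact beta_ne a ha S hposS hgcd (x k) (hxS k) (hcard2 k)
  refine ⟨part1, ?_⟩
  apply matrix_det_ne n a x hinj hpos β part1
  intro i j
  have hgS : Nat.gcd (x i) (x j) ∈ S := hgcd (x i) (hxS i) (x j) (hxS j)
  have := bucket_partition a n x hinj hpos S hS hgcd (Nat.gcd (x i) (x j)) hgS
  rw [← this]
  apply Finset.sum_congr rfl
  intro k _
  rw [hβ k]
  rfl
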